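/- arXiv:1401.6156 — 2 statements merged into one kernel-verified Lean document; each statement's English description precedes it below -/
import Mathlib

section
/- Let λ be a partition of k and let χ^λ denote the character of the representation V^λ of S_k given by Young's orthogonal form. Then the value of χ^λ at the k-cycle (1 2 … k) equals (−1)^b if λ is the hook (k−b, 1, 1, …, 1) with b ones (for some 0 ≤ b ≤ k−1), and equals 0 if λ is not a hook. -/
/-- `T : Fin n → ℕ × ℕ` is a standard tableau of shape `μ` (a Young diagram with `n`
cells): `T` is a bijection from 0-indexed entries (`T k` is the box containing the entry
`k+1`) onto the cells of `μ` such that entries increase along rows and down columns. -/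
def IsStandardTableau (μ : YoungDiagram) (n : ℕ) (T : Fin n → ℕ × ℕ) : Prop :=
  Function.Injective T ∧ Set.range T = (μ.cells : Set (ℕ × ℕ)) ∧
    ∀ j k : Fin n,
      (((T k).1 = (T j).1 ∧ (T k).2 = (T j).2 + 1) ∨
       ((T k).1 = (T j).1 + 1 ∧ (T k).2 = (T j).2)) → j < k

/-- The complex vector space `V^μ` with basis indexed by the standard `μ`-tableaux. -/
abbrev YoungSpace (μ : YoungDiagram) (n : ℕ) : Type :=
  {T : Fin n → ℕ × ℕ // IsStandardTableau μ n T} → ℂ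

/-- The coefficient `ρ = 1/(cont T_{q} − cont T_{p})` featuring in Young's orthogonal
form, where `cont (r, s) = s − r` (here `p`, `q` are 0-indexed entry positions). -/
noncomputable def rhoCoef {n : ℕ} (p q : Fin n) (T : Fin n → ℕ × ℕ) : ℝ :=
  ((((T q).2 : ℝ) - ((T q).1 : ℝ)) - (((T p).2 : ℝ) - ((T p).1 : ℝ)))⁻¹

open scoped Classical in
/-- The operator of Young's orthogonal form attached to the simple transposition
swapping the (0-indexed) entries `p` and `q = p + 1`:  on the basis vector `w_T` it acts
by `w_T ↦ ρ w_T + √(1 − ρ²) w_{s T}` where `ρ = 1/(cont T_{q} − cont T_{p})` and `s T`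
is `T` with the entries `p, q` swapped (the second term being omitted when `s T` is not
standard, in which case `√(1 − ρ²) = 0`). -/
noncomputable def youngOp (μ : YoungDiagram) (n : ℕ) (p q : Fin n) :
    Module.End ℂ (YoungSpace μ n) where
  toFun f := fun S =>
    (rhoCoef p q S.val : ℂ) * f S +
      ((Real.sqrt (1 - (rhoCoef p q S.val) ^ 2) : ℝ) : ℂ) *
        (if h : IsStandardTableau μ n (S.val ∘ Equiv.swap p q) then
          f ⟨S.val ∘ Equiv.swap p q, h⟩ else 0)
  map_add' f g := by
    funext S
    by_cases h : IsStandardTableau μ n (S.val ∘ Equiv.swap p q) <;>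
      simp [h] <;> ring
  map_smul' c f := by
    funext S
    by_cases h : IsStandardTableau μ n (S.val ∘ Equiv.swap p q) <;>
      simp [h] <;> ring

/-- A representation of `Sₙ` on `V^μ` is "the" Young orthogonal form representation if
every adjacent transposition `(p, p+1)` acts by the orthogonal-form operator. -/
def IsYoungOrthogonalRep (μ : YoungDiagram) (n : ℕ)
    (ρ : Representation ℂ (Equiv.Perm (Fin n)) (YoungSpace μ n)) : Prop :=
  ∀ p q : Fin n, (q : ℕ) = (p : ℕ) + 1 → ρ (Equiv.swap p q) = youngOp μ n p q


/-- content as a real number -/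
def contR (x : ℕ × ℕ) : ℝ := (x.2 : ℝ) - (x.1 : ℝ)

/-- standard filling of an arbitrary finset of cells -/
def Std (F : Finset (ℕ × ℕ)) (n : ℕ) (T : Fin n → ℕ × ℕ) : Prop :=
  Function.Injective T ∧ Set.range T = (F : Set (ℕ × ℕ)) ∧
    ∀ j k : Fin n,
      (((T k).1 = (T j).1 ∧ (T k).2 = (T j).2 + 1) ∨
       ((T k).1 = (T j).1 + 1 ∧ (T k).2 = (T j).2)) → j < k

theorem std_finite (F : Finset (ℕ × ℕ)) (n : ℕ) :
    Finite {T : Fin n → ℕ × ℕ // Std F n T} := by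
  let f : {T : Fin n → ℕ × ℕ // Std F n T} → (Fin n → {x // x ∈ F}) := fun T i =>
    ⟨T.1 i, by
      have := T.2.2.1
      have : T.1 i ∈ (F : Set (ℕ × ℕ)) := this ▸ Set.mem_range_self i
      simpa using this⟩
  have hf : Function.Injective f := by
    intro T S h
    apply Subtype.ext
    funext i
    have := congrFun h i
    simpa [f, Subtype.ext_iff] using this
  exact Finite.of_injective f hf

noncomputable instance (F : Finset (ℕ × ℕ)) (n : ℕ) :
    Fintype {T : Fin n → ℕ × ℕ // Std F n T} :=
  have := std_finite F n
  Fintype.ofFinite _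

/-- the weight of a tableau -/
noncomputable def wt {n : ℕ} (T : Fin (n + 1) → ℕ × ℕ) : ℝ :=
  ∏ i : Fin n, (contR (T i.succ) - contR (T i.castSucc))⁻¹

/-- refined sum with last-content marker -/
noncomputable def Rf (n : ℕ) (F : Finset (ℕ × ℕ)) (z : ℝ) : ℝ :=
  ∑ T : {T : Fin (n + 1) → ℕ × ℕ // Std F (n + 1) T},
    wt T.1 * (z - contR (T.1 (Fin.last n)))⁻¹

noncomputable def Ssum (n : ℕ) (F : Finset (ℕ × ℕ)) : ℝ :=
  ∑ T : {T : Fin (n + 1) → ℕ × ℕ // Std F (n + 1) T}, wt T.1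

/-- maximal cells -/
def maxCells (F : Finset (ℕ × ℕ)) : Finset (ℕ × ℕ) :=
  F.filter (fun x => (x.1 + 1, x.2) ∉ F ∧ (x.1, x.2 + 1) ∉ F)

theorem std_last_mem_maxCells {F : Finset (ℕ × ℕ)} {n : ℕ}
    {T : Fin (n + 1) → ℕ × ℕ} (hT : Std F (n + 1) T) :
    T (Fin.last n) ∈ maxCells F := by
  obtain ⟨hinj, hran, hord⟩ := hT
  have hmem : ∀ i, T i ∈ F := by
    intro i
    have : T i ∈ (F : Set (ℕ × ℕ)) := hran ▸ Set.mem_range_self i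
    simpa using this
  refine Finset.mem_filter.2 ⟨hmem _, ?_, ?_⟩
  · intro hc
    have : ((T (Fin.last n)).1 + 1, (T (Fin.last n)).2) ∈ (F : Set (ℕ × ℕ)) := by simpa using hc
    rw [← hran] at this
    obtain ⟨j, hj⟩ := this
    have : Fin.last n < j := by
      apply hord
      right
      constructor <;> simp [hj]
    exact absurd this (by simp [Fin.le_last j, not_lt])
  · intro hc
    have : ((T (Fin.last n)).1, (T (Fin.last n)).2 + 1) ∈ (F : Set (ℕ × ℕ)) := by simpa using hc
    rw [← hran] at this
    obtain ⟨j, hj⟩ := this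
    have : Fin.last n < j := by
      apply hord
      left
      constructor <;> simp [hj]
    exact absurd this (by simp [Fin.le_last j, not_lt])

theorem std_mem {F : Finset (ℕ × ℕ)} {n : ℕ} {T : Fin n → ℕ × ℕ}
    (hT : Std F n T) (i : Fin n) : T i ∈ F := by
  have : T i ∈ (F : Set (ℕ × ℕ)) := hT.2.1 ▸ Set.mem_range_self i
  simpa using this

theorem std_init {F : Finset (ℕ × ℕ)} {n : ℕ} {T : Fin (n + 1) → ℕ × ℕ}
    (hT : Std F (n + 1) T) :
    Std (F.erase (T (Fin.last n))) n (Fin.init T) := by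
  obtain ⟨hinj, hran, hord⟩ := hT
  refine ⟨?_, ?_, ?_⟩
  · intro i j h
    have := hinj (by simpa [Fin.init] using h : T i.castSucc = T j.castSucc)
    exact Fin.castSucc_injective n this
  · ext x
    simp only [Set.mem_range, Finset.coe_erase, Set.mem_diff, Set.mem_singleton_iff]
    constructor
    · rintro ⟨i, rfl⟩
      refine ⟨?_, ?_⟩
      · have : T i.castSucc ∈ Set.range T := Set.mem_range_self _
        rw [hran] at this; simpa [Fin.init] using this
      · intro h
        have : i.castSucc = Fin.last n := hinj (by simpa [Fin.init] using h)
        exact absurd this (Fin.castSucc_lt_last i).ne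
    · rintro ⟨hx, hne⟩
      have : x ∈ Set.range T := by rw [hran]; simpa using hx
      obtain ⟨i, rfl⟩ := this
      have hi : i ≠ Fin.last n := fun h => hne (by rw [h])
      refine ⟨⟨i, Fin.val_lt_last hi⟩, ?_⟩
      simp [Fin.init, Fin.castSucc_mk]
  · intro j k h
    have : j.castSucc < k.castSucc := hord j.castSucc k.castSucc (by simpa [Fin.init] using h)
    simpa using this

theorem std_snoc {F : Finset (ℕ × ℕ)} {n : ℕ} {T : Fin n → ℕ × ℕ} {x : ℕ × ℕ}
    (hT : Std (F.erase x) n T) (hx : x ∈ maxCells F) :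
    Std F (n + 1) (Fin.snoc T x) := by
  obtain ⟨hxF, hx1, hx2⟩ : x ∈ F ∧ (x.1 + 1, x.2) ∉ F ∧ (x.1, x.2 + 1) ∉ F := by
    simpa [maxCells] using hx
  obtain ⟨hinj, hran, hord⟩ := hT
  have hTne : ∀ i : Fin n, T i ≠ x := by
    intro i h
    have := std_mem ⟨hinj, hran, hord⟩ i
    rw [h] at this
    simp at this
  refine ⟨?_, ?_, ?_⟩
  · intro i j h
    rcases Fin.eq_castSucc_or_eq_last i with ⟨i', rfl⟩ | rfl <;>
      rcases Fin.eq_castSucc_or_eq_last j with ⟨j', rfl⟩ | rfl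
    · simp only [Fin.snoc_castSucc] at h
      exact congrArg Fin.castSucc (hinj h)
    · simp only [Fin.snoc_castSucc, Fin.snoc_last] at h
      exact absurd h (hTne i')
    · simp only [Fin.snoc_castSucc, Fin.snoc_last] at h
      exact absurd h.symm (hTne j')
    · rfl
  · ext y
    simp only [Set.mem_range, Finset.mem_coe]
    constructor
    · rintro ⟨i, rfl⟩
      rcases Fin.eq_castSucc_or_eq_last i with ⟨i', rfl⟩ | rfl
      · rw [Fin.snoc_castSucc]
        exact Finset.mem_of_mem_erase (std_mem ⟨hinj, hran, hord⟩ i')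
      · rw [Fin.snoc_last]; exact hxF
    · intro hy
      by_cases hyx : y = x
      · exact ⟨Fin.last n, by rw [Fin.snoc_last, hyx]⟩
      · have : y ∈ (F.erase x : Set (ℕ × ℕ)) := by simp [hyx, hy]
        rw [← hran] at this
        obtain ⟨i, rfl⟩ := this
        exact ⟨i.castSucc, by rw [Fin.snoc_castSucc]⟩
  · intro j k h
    rcases Fin.eq_castSucc_or_eq_last k with ⟨k', rfl⟩ | rfl
    · rcases Fin.eq_castSucc_or_eq_last j with ⟨j', rfl⟩ | rfl
      · simp only [Fin.snoc_castSucc] at h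
        exact Fin.castSucc_lt_castSucc_iff.2 (hord j' k' h)
      · -- T j = x, neighbour of x in F.erase: contradiction with maximality
        exfalso
        simp only [Fin.snoc_castSucc, Fin.snoc_last] at h
        have hk : T k' ∈ F := Finset.mem_of_mem_erase (std_mem ⟨hinj, hran, hord⟩ k')
        rcases h with ⟨h1, h2⟩ | ⟨h1, h2⟩
        · exact hx2 (by rw [← h1, ← h2] at hx2 ⊢; simpa using hk)
        · exact hx1 (by rw [← h1, ← h2] at hx1 ⊢; simpa using hk)
    · -- k is last; need j < last, i.e. j ≠ last
      rcases Fin.eq_castSucc_or_eq_last j with ⟨j', rfl⟩ | rfl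
      · exact Fin.castSucc_lt_last j'
      · exfalso
        simp only [Fin.snoc_last] at h
        omega

open Finset in
theorem sum_decomp (F : Finset (ℕ × ℕ)) (n : ℕ) (g : (Fin (n + 1) → ℕ × ℕ) → ℝ) :
    ∑ T : {T : Fin (n + 1) → ℕ × ℕ // Std F (n + 1) T}, g T.1 =
      ∑ x ∈ maxCells F,
        ∑ T' : {T' : Fin n → ℕ × ℕ // Std (F.erase x) n T'}, g (Fin.snoc T'.1 x) := by
  classical
  have step1 : ∀ T : {T : Fin (n + 1) → ℕ × ℕ // Std F (n + 1) T},
      g T.1 = ∑ x ∈ maxCells F, if T.1 (Fin.last n) = x then g T.1 else 0 := by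
    intro T
    rw [Finset.sum_ite_eq (maxCells F) (T.1 (Fin.last n)) (fun _ => g T.1)]
    simp [std_last_mem_maxCells T.2]
  calc ∑ T : {T : Fin (n + 1) → ℕ × ℕ // Std F (n + 1) T}, g T.1
      = ∑ T : {T : Fin (n + 1) → ℕ × ℕ // Std F (n + 1) T},
          ∑ x ∈ maxCells F, if T.1 (Fin.last n) = x then g T.1 else 0 := by
        exact Finset.sum_congr rfl (fun T _ => step1 T)
    _ = ∑ x ∈ maxCells F, ∑ T : {T : Fin (n + 1) → ℕ × ℕ // Std F (n + 1) T},
          if T.1 (Fin.last n) = x then g T.1 else 0 := Finset.sum_comm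
    _ = _ := by
        refine Finset.sum_congr rfl (fun x hx => ?_)
        rw [← Finset.sum_filter]
        refine Finset.sum_bij'
          (i := fun T hT => (⟨Fin.init T.1, ?_⟩ :
            {T' : Fin n → ℕ × ℕ // Std (F.erase x) n T'}))
          (j := fun T' _ => ⟨Fin.snoc T'.1 x, std_snoc T'.2 hx⟩)
          ?_ ?_ ?_ ?_ ?_
        · have hlast : T.1 (Fin.last n) = x := by
            simpa using (Finset.mem_filter.1 hT).2
          exact hlast ▸ std_init T.2
        · intro a ha; exact Finset.mem_univ _
        · intro a ha
          simp [Fin.snoc_last]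
        · intro a ha
          apply Subtype.ext
          have hlast : a.1 (Fin.last n) = x := by
            simpa using (Finset.mem_filter.1 ha).2
          simp only []
          rw [← hlast, Fin.snoc_init_self]
        · intro a ha
          apply Subtype.ext
          simp only []
          rw [Fin.init_snoc]
        · intro a ha
          have hlast : a.1 (Fin.last n) = x := by
            simpa using (Finset.mem_filter.1 ha).2
          simp only []
          rw [← hlast, Fin.snoc_init_self]

theorem wt_snoc {n : ℕ} (T : Fin (n + 1) → ℕ × ℕ) (x : ℕ × ℕ) :
    wt (Fin.snoc T x) = wt T * (contR x - contR (T (Fin.last n)))⁻¹ := by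
  unfold wt
  rw [Fin.prod_univ_castSucc]
  congr 1
  · apply Finset.prod_congr rfl
    intro i _
    rw [Fin.succ_castSucc]
    rw [Fin.snoc_castSucc, Fin.snoc_castSucc]
  · rw [Fin.succ_last, Fin.snoc_last, Fin.snoc_castSucc]

theorem Rf_rec (n : ℕ) (F : Finset (ℕ × ℕ)) (z : ℝ) :
    Rf (n + 1) F z =
      ∑ x ∈ maxCells F, (z - contR x)⁻¹ * Rf n (F.erase x) (contR x) := by
  unfold Rf
  rw [sum_decomp F (n + 1)
    (fun T => wt T * (z - contR (T (Fin.last (n + 1))))⁻¹)]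
  refine Finset.sum_congr rfl (fun x hx => ?_)
  rw [Finset.mul_sum]
  refine Finset.sum_congr rfl (fun T' _ => ?_)
  rw [Fin.snoc_last, wt_snoc]
  ring

theorem Ssum_rec (n : ℕ) (F : Finset (ℕ × ℕ)) :
    Ssum (n + 1) F = ∑ x ∈ maxCells F, Rf n (F.erase x) (contR x) := by
  unfold Ssum
  rw [sum_decomp F (n + 1) (fun T => wt T)]
  refine Finset.sum_congr rfl (fun x hx => ?_)
  unfold Rf
  refine Finset.sum_congr rfl (fun T' _ => ?_)
  rw [wt_snoc]

/-- the unique standard filling of a singleton -/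
theorem std_singleton (x : ℕ × ℕ) : Std {x} 1 (fun _ => x) := by
  refine ⟨fun a b _ => Subsingleton.elim a b, by simp [Set.range_const], ?_⟩
  rintro j k (⟨h1, h2⟩ | ⟨h1, h2⟩) <;> simp at h1 h2

instance uniqueStdSingleton (x : ℕ × ℕ) :
    Unique {T : Fin (0 + 1) → ℕ × ℕ // Std {x} (0 + 1) T} where
  default := ⟨fun _ => x, std_singleton x⟩
  uniq := by
    rintro ⟨T, hT⟩
    apply Subtype.ext
    funext i
    have : T i ∈ ({x} : Finset (ℕ × ℕ)) := std_mem hT i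
    simpa using this

theorem Rf_singleton (x : ℕ × ℕ) (z : ℝ) : Rf 0 {x} z = (z - contR x)⁻¹ := by
  unfold Rf
  rw [Fintype.sum_unique]
  show wt (fun _ => x) * (z - contR ((fun _ => x) (Fin.last 0)))⁻¹ = _
  simp [wt]

theorem Ssum_singleton (x : ℕ × ℕ) : Ssum 0 {x} = 1 := by
  unfold Ssum
  rw [Fintype.sum_unique]
  simp [wt]

/-! ### hooks -/

def hookF (a b : ℕ) : Finset (ℕ × ℕ) :=
  ((Finset.range (a + 1)).image fun j => (0, j)) ∪
    ((Finset.range (b + 1)).image fun i => (i, 0))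

theorem mem_hookF {a b : ℕ} {y : ℕ × ℕ} :
    y ∈ hookF a b ↔ (y.1 = 0 ∧ y.2 ≤ a) ∨ (y.2 = 0 ∧ y.1 ≤ b) := by
  obtain ⟨y1, y2⟩ := y
  simp only [hookF, Finset.mem_union, Finset.mem_image, Finset.mem_range,
    Nat.lt_succ_iff, Prod.mk.injEq]
  constructor
  · rintro (⟨j, hj, h0, rfl⟩ | ⟨i, hi, rfl, h0⟩)
    · exact Or.inl ⟨h0.symm, hj⟩
    · exact Or.inr ⟨h0.symm, hi⟩
  · rintro (⟨h0, hj⟩ | ⟨h0, hi⟩)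
    · exact Or.inl ⟨y2, hj, h0.symm, rfl⟩
    · exact Or.inr ⟨y1, hi, rfl, h0.symm⟩

theorem lower_hookF (a b : ℕ) : IsLowerSet ((hookF a b : Finset (ℕ × ℕ)) : Set (ℕ × ℕ)) := by
  rintro ⟨y1, y2⟩ ⟨x1, x2⟩ ⟨(h1 : x1 ≤ y1), (h2 : x2 ≤ y2)⟩ hy
  simp only [Finset.mem_coe, mem_hookF] at hy ⊢
  omega

theorem card_hookF (a b : ℕ) : (hookF a b).card = a + b + 1 := by
  classical
  have h1 : ((Finset.range (a + 1)).image fun j => (0, j) : Finset (ℕ × ℕ)).card = a + 1 := by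
    rw [Finset.card_image_of_injective _ (fun i j h => by simpa using h)]
    simp
  have h2 : ((Finset.range (b + 1)).image fun i => (i, 0) : Finset (ℕ × ℕ)).card = b + 1 := by
    rw [Finset.card_image_of_injective _ (fun i j h => by simpa using h)]
    simp
  have hinter : (((Finset.range (a + 1)).image fun j => ((0 : ℕ), j)) ∩
      ((Finset.range (b + 1)).image fun i => (i, (0 : ℕ)))) = {((0 : ℕ), (0 : ℕ))} := by
    ext y
    constructor
    · intro hy
      simp only [Finset.mem_inter, Finset.mem_image, Finset.mem_range] at hy
      obtain ⟨⟨j, _, hj⟩, ⟨i, _, hi⟩⟩ := hy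
      have h1 : y.1 = 0 := by rw [← hj]
      have h2 : y.2 = 0 := by rw [← hi]
      exact Finset.mem_singleton.2 (Prod.ext h1 h2)
    · intro hy
      simp only [Finset.mem_singleton] at hy
      subst hy
      exact Finset.mem_inter.2
        ⟨Finset.mem_image.2 ⟨0, by simp⟩, Finset.mem_image.2 ⟨0, by simp⟩⟩
  have := Finset.card_union_add_card_inter
    ((Finset.range (a + 1)).image fun j => ((0 : ℕ), j))
    ((Finset.range (b + 1)).image fun i => (i, (0 : ℕ)))
  rw [h1, h2, hinter] at this
  simp only [Finset.card_singleton] at this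
  unfold hookF
  omega

theorem one_one_not_mem_hookF (a b : ℕ) : ((1, 1) : ℕ × ℕ) ∉ hookF a b := by
  simp [mem_hookF]

theorem mem_maxCells {F : Finset (ℕ × ℕ)} {x : ℕ × ℕ} :
    x ∈ maxCells F ↔ x ∈ F ∧ (x.1 + 1, x.2) ∉ F ∧ (x.1, x.2 + 1) ∉ F := by
  simp [maxCells]

theorem maxCells_hookF_pos (a' b' : ℕ) :
    maxCells (hookF (a' + 1) (b' + 1)) = {((0 : ℕ), a' + 1), (b' + 1, (0 : ℕ))} := by
  ext ⟨y1, y2⟩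
  simp only [mem_maxCells, mem_hookF, Finset.mem_insert, Finset.mem_singleton,
    Prod.mk.injEq]
  omega

theorem maxCells_hookF_row (a : ℕ) : maxCells (hookF a 0) = {((0 : ℕ), a)} := by
  ext ⟨y1, y2⟩
  simp only [mem_maxCells, mem_hookF, Finset.mem_singleton, Prod.mk.injEq]
  omega

theorem maxCells_hookF_col (b' : ℕ) : maxCells (hookF 0 (b' + 1)) = {((b' + 1 : ℕ), (0 : ℕ))} := by
  ext ⟨y1, y2⟩
  simp only [mem_maxCells, mem_hookF, Finset.mem_singleton, Prod.mk.injEq]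
  omega

theorem erase_hookF_arm (a b : ℕ) :
    (hookF (a + 1) b).erase (0, a + 1) = hookF a b := by
  ext ⟨y1, y2⟩
  simp only [Finset.mem_erase, mem_hookF, Prod.mk.injEq, ne_eq, not_and]
  omega

theorem erase_hookF_leg (a b : ℕ) :
    (hookF a (b + 1)).erase (b + 1, 0) = hookF a b := by
  ext ⟨y1, y2⟩
  simp only [Finset.mem_erase, mem_hookF, Prod.mk.injEq, ne_eq, not_and]
  omega

theorem erase_max_lower {F : Finset (ℕ × ℕ)} (hF : IsLowerSet (F : Set (ℕ × ℕ)))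
    {x : ℕ × ℕ} (hx : x ∈ maxCells F) :
    IsLowerSet ((F.erase x : Finset (ℕ × ℕ)) : Set (ℕ × ℕ)) := by
  obtain ⟨hxF, hx1, hx2⟩ := mem_maxCells.1 hx
  rintro ⟨y1, y2⟩ ⟨w1, w2⟩ ⟨(h1 : w1 ≤ y1), (h2 : w2 ≤ y2)⟩ hy
  simp only [Finset.coe_erase, Set.mem_diff, Finset.mem_coe, Set.mem_singleton_iff] at hy ⊢
  obtain ⟨hyF, hyx⟩ := hy
  refine ⟨hF (by exact ⟨h1, h2⟩) hyF, ?_⟩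
  rintro rfl
  -- x = (w1, w2) ≤ y ∈ F, y ≠ x: a strictly larger cell in F contradicts maximality
  apply hyx
  by_contra hne
  have hlt : w1 < y1 ∨ w2 < y2 := by
    rcases eq_or_ne w1 y1 with he1 | hne1
    · rcases eq_or_ne w2 y2 with he2 | hne2
      · exact absurd (by rw [he1, he2] : ((y1, y2) : ℕ × ℕ) = (w1, w2)) hne
      · exact Or.inr (by omega)
    · exact Or.inl (by omega)
  rcases hlt with h | h
  · exact hx1 (hF (show ((w1 + 1 : ℕ), w2) ≤ (y1, y2) from ⟨by omega, h2⟩) hyF)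
  · exact hx2 (hF (show ((w1 : ℕ), w2 + 1) ≤ (y1, y2) from ⟨h1, by omega⟩) hyF)

theorem hook_struct {F : Finset (ℕ × ℕ)} (hF : IsLowerSet (F : Set (ℕ × ℕ)))
    (hne : F.Nonempty) (h11 : ((1, 1) : ℕ × ℕ) ∉ F) :
    ∃ a b : ℕ, F = hookF a b := by
  classical
  have himg2 : (F.image Prod.snd).Nonempty := hne.image _
  have himg1 : (F.image Prod.fst).Nonempty := hne.image _
  set a := (F.image Prod.snd).max' himg2 with ha
  set b := (F.image Prod.fst).max' himg1 with hb
  have hrowcol : ∀ y ∈ F, y.1 = 0 ∨ y.2 = 0 := by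
    rintro ⟨y1, y2⟩ hy
    by_contra hc
    push_neg at hc
    exact h11 (hF (show ((1 : ℕ), (1 : ℕ)) ≤ (y1, y2) from ⟨by omega, by omega⟩) hy)
  have hamem : ((0 : ℕ), a) ∈ F := by
    obtain ⟨⟨u1, u2⟩, hy, hya⟩ := Finset.mem_image.1 ((F.image Prod.snd).max'_mem himg2)
    simp only [] at hya
    exact hF (show ((0 : ℕ), a) ≤ (u1, u2) from ⟨Nat.zero_le _, by omega⟩) hy
  have hbmem : (b, (0 : ℕ)) ∈ F := by
    obtain ⟨⟨u1, u2⟩, hy, hyb⟩ := Finset.mem_image.1 ((F.image Prod.fst).max'_mem himg1)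
    simp only [] at hyb
    exact hF (show (b, (0 : ℕ)) ≤ (u1, u2) from ⟨by omega, Nat.zero_le _⟩) hy
  refine ⟨a, b, ?_⟩
  ext ⟨y1, y2⟩
  rw [mem_hookF]
  constructor
  · intro hy
    have h2 : y2 ≤ a := by
      rw [ha]
      exact Finset.le_max' _ y2 (Finset.mem_image.2 ⟨(y1, y2), hy, rfl⟩)
    have h1 : y1 ≤ b := by
      rw [hb]
      exact Finset.le_max' _ y1 (Finset.mem_image.2 ⟨(y1, y2), hy, rfl⟩)
    rcases hrowcol _ hy with h | h
    · exact Or.inl ⟨h, h2⟩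
    · exact Or.inr ⟨h, h1⟩
  · rintro (⟨h0, h⟩ | ⟨h0, h⟩)
    · exact hF (show ((y1 : ℕ), y2) ≤ ((0 : ℕ), a) from ⟨by omega, h⟩) hamem
    · exact hF (show ((y1 : ℕ), y2) ≤ (b, (0 : ℕ)) from ⟨h, by omega⟩) hbmem

/-! ### the closed-form value -/

noncomputable def hookVal (a b : ℕ) (z : ℝ) : ℝ :=
  if a = 0 ∧ b = 0 then z⁻¹
  else (-1) ^ b * ((a : ℝ) * (z - (a : ℝ))⁻¹ + (b : ℝ) * (z + (b : ℝ))⁻¹) / ((a : ℝ) + (b : ℝ))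

theorem hookVal_arm (a' b' : ℕ) :
    hookVal a' (b' + 1) ((a' : ℝ) + 1) =
      (-1) ^ (b' + 1) * ((a' : ℝ) + 1) / (((a' : ℝ) + 1) + ((b' : ℝ) + 1)) := by
  rw [hookVal, if_neg (by simp)]
  have h1 : ((a' : ℝ) + 1 - (a' : ℝ)) = 1 := by ring
  push_cast
  rw [h1]
  have h2 : ((a' : ℝ) + 1 + ((b' : ℝ) + 1)) ≠ 0 := by positivity
  have h3 : ((a' : ℝ) + ((b' : ℝ) + 1)) ≠ 0 := by positivity
  field_simp
  ring

theorem hookVal_leg (a' b' : ℕ) :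
    hookVal (a' + 1) b' (-((b' : ℝ) + 1)) =
      (-1) ^ (b' + 1) * ((b' : ℝ) + 1) / (((a' : ℝ) + 1) + ((b' : ℝ) + 1)) := by
  rcases Nat.eq_zero_or_pos b' with rfl | hb
  · rw [hookVal, if_neg (by simp)]
    push_cast
    have e1 : (-((0 : ℝ) + 1) - ((a' : ℝ) + 1)) = -(((a' : ℝ)) + 2) := by ring
    rw [e1]
    have h2 : ((a' : ℝ) + 2) ≠ 0 := by positivity
    have h3 : ((a' : ℝ) + 1) ≠ 0 := by positivity
    rw [inv_neg]
    field_simp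
    ring
  · obtain ⟨b'', rfl⟩ : ∃ b'', b' = b'' + 1 := ⟨b' - 1, by omega⟩
    rw [hookVal, if_neg (by simp)]
    push_cast
    have e1 : (-((b'' : ℝ) + 1 + 1) + ((b'' : ℝ) + 1)) = -1 := by ring
    have e2 : (-((b'' : ℝ) + 1 + 1) - ((a' : ℝ) + 1)) = -(((a' : ℝ)) + (b'' : ℝ) + 3) := by ring
    rw [e1, e2, inv_neg]
    have hW : ((a' : ℝ) + (b'' : ℝ) + 3) ≠ 0 := by positivity
    have hE : ((a' : ℝ) + 1 + ((b'' : ℝ) + 1)) ≠ 0 := by positivity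
    have hpow : ((-1 : ℝ)) ^ (b'' + 1 + 1) = (-1) ^ (b'' + 1) * (-1) := pow_succ _ _
    rw [hpow, mul_div_assoc, mul_assoc, mul_div_assoc]
    congr 1
    rw [inv_neg]
    field_simp
    ring

theorem hookVal_row (a' : ℕ) : hookVal a' 0 ((a' : ℝ) + 1) = 1 := by
  rcases Nat.eq_zero_or_pos a' with rfl | ha
  · simp [hookVal]
  · obtain ⟨a'', rfl⟩ : ∃ a'', a' = a'' + 1 := ⟨a' - 1, by omega⟩
    rw [hookVal, if_neg (by simp)]
    push_cast
    have h1 : ((a'' : ℝ) + 1 + 1 - ((a'' : ℝ) + 1)) = 1 := by ring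
    rw [h1]
    have h3 : ((a'' : ℝ) + 1) ≠ 0 := by positivity
    field_simp
    ring

theorem hookVal_col (b' : ℕ) : hookVal 0 b' (-((b' : ℝ) + 1)) = (-1) ^ (b' + 1) := by
  rcases Nat.eq_zero_or_pos b' with rfl | hb
  · norm_num [hookVal]
  · obtain ⟨b'', rfl⟩ : ∃ b'', b' = b'' + 1 := ⟨b' - 1, by omega⟩
    rw [hookVal, if_neg (by simp)]
    push_cast
    have h1 : (-((b'' : ℝ) + 1 + 1) + ((b'' : ℝ) + 1)) = -1 := by ring
    rw [h1]
    have h3 : ((b'' : ℝ) + 1) ≠ 0 := by positivity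
    have hpow : ((-1 : ℝ)) ^ (b'' + 1 + 1) = (-1) ^ (b'' + 1) * (-1) := pow_succ _ _
    rw [hpow, mul_div_assoc]
    rw [show ((-1 : ℝ))^(b'' + 1) * (-1) = ((-1 : ℝ))^(b'' + 1) * (-1) from rfl]
    rw [show ((0 : ℝ) * (-((b'' : ℝ) + 1 + 1) - (0 : ℝ))⁻¹ + ((b'' : ℝ) + 1) * (-1)⁻¹) = -((b'' : ℝ) + 1) by norm_num]
    rw [show ((0 : ℝ) + ((b'' : ℝ) + 1)) = ((b'' : ℝ) + 1) by ring]
    field_simp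

theorem hookVal_zero (a' b' : ℕ) : hookVal (a' + 1) (b' + 1) 0 = 0 := by
  rw [hookVal, if_neg (by simp)]
  have h1 : ((a' : ℝ) + 1) ≠ 0 := by positivity
  have h2 : ((b' : ℝ) + 1) ≠ 0 := by positivity
  push_cast
  have e1 : ((0 : ℝ) - ((a' : ℝ) + 1)) = -(((a' : ℝ)) + 1) := by ring
  have e2 : ((0 : ℝ) + ((b' : ℝ) + 1)) = ((b' : ℝ) + 1) := by ring
  rw [e1, e2, inv_neg, mul_neg, mul_inv_cancel₀ h1, mul_inv_cancel₀ h2]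
  simp

theorem cancel_aux (c W : ℝ) (hc : c ≠ 0) : c * W / c = W := by
  rw [mul_comm, mul_div_assoc, div_self hc, mul_one]

theorem Rf_closed (n : ℕ) : ∀ (F : Finset (ℕ × ℕ)), IsLowerSet (F : Set (ℕ × ℕ)) →
    F.card = n + 1 →
    (∀ z, ((1, 1) : ℕ × ℕ) ∈ F → Rf n F z = 0) ∧
    (∀ a b z, F = hookF a b → Rf n F z = hookVal a b z) := by
  induction n with
  | zero =>
    intro F hlow hcard
    obtain ⟨x, hx⟩ := Finset.card_eq_one.1 hcard
    have h00 : ((0, 0) : ℕ × ℕ) ∈ F :=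
      hlow (show ((0 : ℕ), (0 : ℕ)) ≤ x from ⟨Nat.zero_le _, Nat.zero_le _⟩) (by simp [hx])
    have hx0 : x = (0, 0) := by
      rw [hx] at h00
      exact (Finset.mem_singleton.1 h00).symm
    subst hx0
    constructor
    · intro z h11
      rw [hx] at h11
      simp at h11
    · intro a b z hF
      have hab : a = 0 ∧ b = 0 := by
        have := card_hookF a b
        rw [← hF, hcard] at this
        omega
      obtain ⟨rfl, rfl⟩ := hab
      rw [hx, Rf_singleton]
      simp [hookVal, contR]
  | succ n IH =>
    intro F hlow hcard
    have key : ∀ x ∈ maxCells F, ((1, 1) : ℕ × ℕ) ∈ F →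
        Rf n (F.erase x) (contR x) = 0 := by
      intro x hx h11
      have hlow' := erase_max_lower hlow hx
      have hcard' : (F.erase x).card = n + 1 := by
        rw [Finset.card_erase_of_mem (mem_maxCells.1 hx).1]
        omega
      by_cases h11' : ((1, 1) : ℕ × ℕ) ∈ F.erase x
      · exact (IH _ hlow' hcard').1 _ h11'
      · have hxeq : x = (1, 1) := by
          by_contra hne
          exact h11' (Finset.mem_erase.2 ⟨fun h => hne h.symm, h11⟩)
        subst hxeq
        have hne' : (F.erase ((1, 1) : ℕ × ℕ)).Nonempty := Finset.card_pos.1 (by omega)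
        obtain ⟨a, b, hab⟩ := hook_struct hlow' hne' (Finset.notMem_erase _ _)
        have h01 : ((0, 1) : ℕ × ℕ) ∈ F.erase ((1, 1) : ℕ × ℕ) :=
          Finset.mem_erase.2 ⟨by simp,
            hlow (show ((0 : ℕ), (1 : ℕ)) ≤ (1, 1) from ⟨by omega, le_rfl⟩) h11⟩
        have h10 : ((1, 0) : ℕ × ℕ) ∈ F.erase ((1, 1) : ℕ × ℕ) :=
          Finset.mem_erase.2 ⟨by simp,
            hlow (show ((1 : ℕ), (0 : ℕ)) ≤ (1, 1) from ⟨le_rfl, by omega⟩) h11⟩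
        rw [hab, mem_hookF] at h01 h10
        obtain ⟨a', rfl⟩ : ∃ a', a = a' + 1 := ⟨a - 1, by omega⟩
        obtain ⟨b', rfl⟩ : ∃ b', b = b' + 1 := ⟨b - 1, by omega⟩
        rw [(IH _ hlow' hcard').2 _ _ _ hab]
        have hc : contR ((1, 1) : ℕ × ℕ) = 0 := by simp [contR]
        rw [hc, hookVal_zero]
    constructor
    · intro z h11
      rw [Rf_rec]
      apply Finset.sum_eq_zero
      intro x hx
      rw [key x hx h11, mul_zero]
    · intro a b z hF
      subst hF
      have hab : a + b = n + 1 := by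
        have := card_hookF a b
        omega
      rcases b with _ | b'
      · -- row
        obtain rfl : a = n + 1 := by omega
        rw [Rf_rec, maxCells_hookF_row, Finset.sum_singleton, erase_hookF_arm n 0]
        rw [(IH _ (lower_hookF n 0) (by rw [card_hookF])).2 n 0 _ rfl]
        have hc : contR ((0 : ℕ), n + 1) = (n : ℝ) + 1 := by
          simp only [contR]
          push_cast
          ring
        rw [hc, hookVal_row n, hookVal, if_neg (by simp)]
        have hne : ((n : ℝ) + 1) ≠ 0 := by positivity
        push_cast
        rw [show ((n : ℝ) + 1) * (z - ((n : ℝ) + 1))⁻¹ + 0 * (z + 0)⁻¹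
            = ((n : ℝ) + 1) * (z - ((n : ℝ) + 1))⁻¹ by ring]
        rw [show ((n : ℝ) + 1 + 0) = (n : ℝ) + 1 by ring]
        rw [pow_zero, one_mul, cancel_aux _ _ hne, mul_one]
      · rcases a with _ | a'
        · -- column
          rw [Rf_rec, maxCells_hookF_col b', Finset.sum_singleton, erase_hookF_leg 0 b']
          rw [(IH _ (lower_hookF 0 b') (by rw [card_hookF]; omega)).2 0 b' _ rfl]
          have hc : contR ((b' + 1 : ℕ), (0 : ℕ)) = -((b' : ℝ) + 1) := by
            simp only [contR]
            push_cast
            ring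
          rw [hc, hookVal_col b', hookVal, if_neg (by simp)]
          have hne : ((b' : ℝ) + 1) ≠ 0 := by positivity
          push_cast
          rw [show ((0 : ℝ) * (z - 0)⁻¹ + ((b' : ℝ) + 1) * (z + ((b' : ℝ) + 1))⁻¹)
              = ((b' : ℝ) + 1) * (z + ((b' : ℝ) + 1))⁻¹ by ring]
          rw [show ((0 : ℝ) + ((b' : ℝ) + 1)) = (b' : ℝ) + 1 by ring]
          rw [mul_comm ((b' : ℝ) + 1) _]
          rw [mul_div_assoc, mul_div_assoc, div_self hne, mul_one]
          rw [show (z - -((b' : ℝ) + 1)) = z + ((b' : ℝ) + 1) by ring]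
          ring
        · -- genuine hook
          rw [Rf_rec, maxCells_hookF_pos a' b']
          rw [Finset.sum_pair (show ((0 : ℕ), a' + 1) ≠ ((b' + 1 : ℕ), (0 : ℕ)) by simp)]
          rw [erase_hookF_arm a' (b' + 1), erase_hookF_leg (a' + 1) b']
          rw [(IH _ (lower_hookF a' (b' + 1)) (by rw [card_hookF]; omega)).2 a' (b' + 1) _ rfl]
          rw [(IH _ (lower_hookF (a' + 1) b') (by rw [card_hookF]; omega)).2 (a' + 1) b' _ rfl]
          have hc1 : contR ((0 : ℕ), a' + 1) = (a' : ℝ) + 1 := by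
            simp only [contR]
            push_cast
            ring
          have hc2 : contR ((b' + 1 : ℕ), (0 : ℕ)) = -((b' : ℝ) + 1) := by
            simp only [contR]
            push_cast
            ring
          rw [hc1, hc2]
          rw [show ((a' : ℝ) + 1) = ((a' : ℝ) + 1) from rfl]
          rw [hookVal_arm a' b', hookVal_leg a' b', hookVal, if_neg (by simp)]
          push_cast
          ring

theorem erase_term_zero (n : ℕ) (F : Finset (ℕ × ℕ)) (hlow : IsLowerSet (F : Set (ℕ × ℕ)))
    (hcard : F.card = n + 2) (h11 : ((1, 1) : ℕ × ℕ) ∈ F)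
    (x : ℕ × ℕ) (hx : x ∈ maxCells F) :
    Rf n (F.erase x) (contR x) = 0 := by
  have hlow' := erase_max_lower hlow hx
  have hcard' : (F.erase x).card = n + 1 := by
    rw [Finset.card_erase_of_mem (mem_maxCells.1 hx).1]
    omega
  by_cases h11' : ((1, 1) : ℕ × ℕ) ∈ F.erase x
  · exact (Rf_closed n _ hlow' hcard').1 _ h11'
  · have hxeq : x = (1, 1) := by
      by_contra hne
      exact h11' (Finset.mem_erase.2 ⟨fun h => hne h.symm, h11⟩)
    subst hxeq
    have hne' : (F.erase ((1, 1) : ℕ × ℕ)).Nonempty := Finset.card_pos.1 (by omega)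
    obtain ⟨a, b, hab⟩ := hook_struct hlow' hne' (Finset.notMem_erase _ _)
    have h01 : ((0, 1) : ℕ × ℕ) ∈ F.erase ((1, 1) : ℕ × ℕ) :=
      Finset.mem_erase.2 ⟨by simp,
        hlow (show ((0 : ℕ), (1 : ℕ)) ≤ (1, 1) from ⟨by omega, le_rfl⟩) h11⟩
    have h10 : ((1, 0) : ℕ × ℕ) ∈ F.erase ((1, 1) : ℕ × ℕ) :=
      Finset.mem_erase.2 ⟨by simp,
        hlow (show ((1 : ℕ), (0 : ℕ)) ≤ (1, 1) from ⟨le_rfl, by omega⟩) h11⟩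
    rw [hab, mem_hookF] at h01 h10
    obtain ⟨a', rfl⟩ : ∃ a', a = a' + 1 := ⟨a - 1, by omega⟩
    obtain ⟨b', rfl⟩ : ∃ b', b = b' + 1 := ⟨b - 1, by omega⟩
    rw [(Rf_closed n _ hlow' hcard').2 _ _ _ hab]
    have hc : contR ((1, 1) : ℕ × ℕ) = 0 := by simp [contR]
    rw [hc, hookVal_zero]

theorem Ssum_eval (n : ℕ) (F : Finset (ℕ × ℕ)) (hlow : IsLowerSet (F : Set (ℕ × ℕ)))
    (hcard : F.card = n + 1) :
    (((1, 1) : ℕ × ℕ) ∈ F → Ssum n F = 0) ∧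
    (∀ a b, F = hookF a b → Ssum n F = (-1 : ℝ) ^ b) := by
  rcases n with _ | n
  · obtain ⟨x, hx⟩ := Finset.card_eq_one.1 hcard
    have h00 : ((0, 0) : ℕ × ℕ) ∈ F :=
      hlow (show ((0 : ℕ), (0 : ℕ)) ≤ x from ⟨Nat.zero_le _, Nat.zero_le _⟩) (by simp [hx])
    have hx0 : x = (0, 0) := by
      rw [hx] at h00
      exact (Finset.mem_singleton.1 h00).symm
    subst hx0
    constructor
    · intro h11
      rw [hx] at h11
      simp at h11
    · intro a b hF
      have hab : a = 0 ∧ b = 0 := by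
        have := card_hookF a b
        rw [← hF, hcard] at this
        omega
      obtain ⟨rfl, rfl⟩ := hab
      rw [hx, Ssum_singleton]
      simp
  · constructor
    · intro h11
      rw [Ssum_rec]
      exact Finset.sum_eq_zero (fun x hx => erase_term_zero n F hlow hcard h11 x hx)
    · intro a b hF
      subst hF
      have hab : a + b = n + 1 := by
        have := card_hookF a b
        omega
      rcases b with _ | b'
      · -- row
        obtain rfl : a = n + 1 := by omega
        rw [Ssum_rec, maxCells_hookF_row, Finset.sum_singleton, erase_hookF_arm n 0]
        rw [(Rf_closed n _ (lower_hookF n 0) (by rw [card_hookF])).2 n 0 _ rfl]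
        have hc : contR ((0 : ℕ), n + 1) = (n : ℝ) + 1 := by
          simp only [contR]
          push_cast
          ring
        rw [hc, hookVal_row n, pow_zero]
      · rcases a with _ | a'
        · -- column
          rw [Ssum_rec, maxCells_hookF_col b', Finset.sum_singleton, erase_hookF_leg 0 b']
          rw [(Rf_closed n _ (lower_hookF 0 b') (by rw [card_hookF]; omega)).2 0 b' _ rfl]
          have hc : contR ((b' + 1 : ℕ), (0 : ℕ)) = -((b' : ℝ) + 1) := by
            simp only [contR]
            push_cast
            ring
          rw [hc, hookVal_col b']
        · -- genuine hook
          rw [Ssum_rec, maxCells_hookF_pos a' b']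
          rw [Finset.sum_pair (show ((0 : ℕ), a' + 1) ≠ ((b' + 1 : ℕ), (0 : ℕ)) by simp)]
          rw [erase_hookF_arm a' (b' + 1), erase_hookF_leg (a' + 1) b']
          rw [(Rf_closed n _ (lower_hookF a' (b' + 1)) (by rw [card_hookF]; omega)).2 a'
            (b' + 1) _ rfl]
          rw [(Rf_closed n _ (lower_hookF (a' + 1) b') (by rw [card_hookF]; omega)).2 (a' + 1)
            b' _ rfl]
          have hc1 : contR ((0 : ℕ), a' + 1) = (a' : ℝ) + 1 := by
            simp only [contR]
            push_cast
            ring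
          have hc2 : contR ((b' + 1 : ℕ), (0 : ℕ)) = -((b' : ℝ) + 1) := by
            simp only [contR]
            push_cast
            ring
          rw [hc1, hc2, hookVal_arm a' b', hookVal_leg a' b']
          have hE : ((a' : ℝ) + 1 + ((b' : ℝ) + 1)) ≠ 0 := by positivity
          field_simp

open scoped Classical

theorem comp_swap_swap {α β : Type*} [DecidableEq α] (f : α → β) (p q : α) :
    (f ∘ Equiv.swap p q) ∘ Equiv.swap p q = f := by
  funext x
  simp [Function.comp, Equiv.swap_apply_self]

theorem youngOp_single (μ : YoungDiagram) (n : ℕ) (p q : Fin n) (hpq : p ≠ q)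
    (T : {T : Fin n → ℕ × ℕ // IsStandardTableau μ n T}) :
    youngOp μ n p q (Pi.single T (1 : ℂ)) =
      (rhoCoef p q T.1 : ℂ) • (Pi.single T 1 : YoungSpace μ n) +
        (if h : IsStandardTableau μ n (T.1 ∘ Equiv.swap p q) then
          ((Real.sqrt (1 - rhoCoef p q (T.1 ∘ Equiv.swap p q) ^ 2) : ℝ) : ℂ) •
            (Pi.single (⟨T.1 ∘ Equiv.swap p q, h⟩ :
              {T : Fin n → ℕ × ℕ // IsStandardTableau μ n T}) 1 : YoungSpace μ n)
        else 0) := by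
  have hTne : T.1 ∘ Equiv.swap p q ≠ T.1 := by
    intro h
    have := congrFun h p
    simp only [Function.comp, Equiv.swap_apply_left] at this
    exact hpq (T.2.1 this).symm
  funext S
  simp only [youngOp, LinearMap.coe_mk, AddHom.coe_mk, Pi.add_apply, Pi.smul_apply,
    smul_eq_mul, dite_apply, Pi.zero_apply]
  by_cases hST : S = T
  · subst hST
    rw [Pi.single_eq_same]
    have h2 : ∀ (h : IsStandardTableau μ n (S.1 ∘ Equiv.swap p q)),
        (Pi.single S (1 : ℂ) : YoungSpace μ n)
          (⟨S.1 ∘ Equiv.swap p q, h⟩ :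
            {T : Fin n → ℕ × ℕ // IsStandardTableau μ n T}) = 0 := by
      intro h
      rw [Pi.single_eq_of_ne]
      intro he
      exact hTne (congrArg Subtype.val he)
    have h3 : ∀ (h : IsStandardTableau μ n (S.1 ∘ Equiv.swap p q)),
        (Pi.single (⟨S.1 ∘ Equiv.swap p q, h⟩ :
          {T : Fin n → ℕ × ℕ // IsStandardTableau μ n T}) (1 : ℂ) : YoungSpace μ n) S = 0 := by
      intro h
      rw [Pi.single_eq_of_ne]
      intro he
      exact hTne (congrArg Subtype.val he).symm
    by_cases h : IsStandardTableau μ n (S.1 ∘ Equiv.swap p q)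
    · rw [dif_pos h, dif_pos h, h2 h, h3 h]
      simp
    · rw [dif_neg h, dif_neg h]
      simp
  · rw [Pi.single_eq_of_ne hST]
    by_cases hsw : S.1 = T.1 ∘ Equiv.swap p q
    · have hstdS : IsStandardTableau μ n (S.1 ∘ Equiv.swap p q) := by
        rw [hsw, comp_swap_swap]
        exact T.2
      have hstdT : IsStandardTableau μ n (T.1 ∘ Equiv.swap p q) := hsw ▸ S.2
      rw [dif_pos hstdS, dif_pos hstdT]
      have hS1 : (Pi.single T (1 : ℂ) : YoungSpace μ n)
          (⟨S.1 ∘ Equiv.swap p q, hstdS⟩ :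
            {T : Fin n → ℕ × ℕ // IsStandardTableau μ n T}) = 1 := by
        rw [show (⟨S.1 ∘ Equiv.swap p q, hstdS⟩ :
            {T : Fin n → ℕ × ℕ // IsStandardTableau μ n T}) = T from
          (Subtype.ext (show T.1 = S.1 ∘ Equiv.swap p q by
            rw [hsw, comp_swap_swap])).symm, Pi.single_eq_same]
      have hS2 : (Pi.single (⟨T.1 ∘ Equiv.swap p q, hstdT⟩ :
          {T : Fin n → ℕ × ℕ // IsStandardTableau μ n T}) (1 : ℂ) : YoungSpace μ n) S = 1 := by
        rw [show S = ⟨T.1 ∘ Equiv.swap p q, hstdT⟩ from Subtype.ext hsw, Pi.single_eq_same]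
      rw [hS1, hS2]
      have hrr : rhoCoef p q (T.1 ∘ Equiv.swap p q) = rhoCoef p q S.1 := by rw [hsw]
      rw [hrr]
      simp
    · have hz1 : ∀ (h : IsStandardTableau μ n (S.1 ∘ Equiv.swap p q)),
          (Pi.single T (1 : ℂ) : YoungSpace μ n)
            (⟨S.1 ∘ Equiv.swap p q, h⟩ :
              {T : Fin n → ℕ × ℕ // IsStandardTableau μ n T}) = 0 := by
        intro h
        rw [Pi.single_eq_of_ne]
        intro he
        apply hsw
        have h5 : S.1 ∘ Equiv.swap p q = T.1 := congrArg Subtype.val he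
        rw [← h5, comp_swap_swap]
      have hz2 : ∀ (h : IsStandardTableau μ n (T.1 ∘ Equiv.swap p q)),
          (Pi.single (⟨T.1 ∘ Equiv.swap p q, h⟩ :
            {T : Fin n → ℕ × ℕ // IsStandardTableau μ n T}) (1 : ℂ) : YoungSpace μ n) S = 0 := by
        intro h
        rw [Pi.single_eq_of_ne]
        intro he
        exact hsw (congrArg Subtype.val he)
      by_cases h : IsStandardTableau μ n (S.1 ∘ Equiv.swap p q) <;>
        by_cases h' : IsStandardTableau μ n (T.1 ∘ Equiv.swap p q)
      · rw [dif_pos h, dif_pos h', hz1 h, hz2 h']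
        simp
      · rw [dif_pos h, dif_neg h', hz1 h]
        simp
      · rw [dif_neg h, dif_pos h', hz2 h']
        simp
      · rw [dif_neg h, dif_neg h']
        simp

def ppF (m i : ℕ) : Fin (m + 1) := ⟨min i m, by omega⟩
def qqF (m i : ℕ) : Fin (m + 1) := ⟨min (i + 1) m, by omega⟩

theorem ppF_val {m i : ℕ} (h : i < m) : ((ppF m i : Fin (m + 1)) : ℕ) = i := by
  simp [ppF]
  omega

theorem qqF_val {m i : ℕ} (h : i < m) : ((qqF m i : Fin (m + 1)) : ℕ) = i + 1 := by
  simp [qqF]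
  omega

theorem ppF_ne_qqF {m i : ℕ} (h : i < m) : ppF m i ≠ qqF m i := by
  intro he
  have := congrArg Fin.val he
  rw [ppF_val h, qqF_val h] at this
  omega

noncomputable def AopL (μ : YoungDiagram) (m : ℕ) (r : ℕ) :
    Module.End ℂ (YoungSpace μ (m + 1)) :=
  ((List.range r).map (fun i => youngOp μ (m + 1) (ppF m i) (qqF m i))).prod

theorem AopL_zero (μ : YoungDiagram) (m : ℕ) : AopL μ m 0 = 1 := by
  simp [AopL]

theorem AopL_succ (μ : YoungDiagram) (m : ℕ) (r : ℕ) :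
    AopL μ m (r + 1) = AopL μ m r * youngOp μ (m + 1) (ppF m r) (qqF m r) := by
  unfold AopL
  rw [List.range_succ, List.map_append, List.prod_append]
  simp

theorem AopL_vanish (μ : YoungDiagram) (m : ℕ) :
    ∀ r, r ≤ m → ∀ (T S : {T : Fin (m + 1) → ℕ × ℕ // IsStandardTableau μ (m + 1) T}),
      (∃ j : Fin (m + 1), r + 1 ≤ (j : ℕ) ∧ T.1 j ≠ S.1 j) →
      (AopL μ m r (Pi.single T 1)) S = 0 := by
  intro r
  induction r with
  | zero =>
    intro _ T S ⟨j, _, hj⟩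
    rw [AopL_zero]
    simp only [Module.End.one_apply]
    rw [Pi.single_eq_of_ne]
    intro he
    exact hj (by rw [he])
  | succ r IH =>
    intro hr T S ⟨j, hjr, hj⟩
    have hrm : r < m := by omega
    rw [AopL_succ]
    simp only [Module.End.mul_apply]
    rw [youngOp_single μ (m + 1) _ _ (ppF_ne_qqF hrm) T]
    rw [map_add, map_smul]
    by_cases h : IsStandardTableau μ (m + 1) (T.1 ∘ Equiv.swap (ppF m r) (qqF m r))
    · rw [dif_pos h, map_smul]
      simp only [Pi.add_apply, Pi.smul_apply, smul_eq_mul]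
      rw [IH (by omega) T S ⟨j, by omega, hj⟩]
      have hswj : T.1 (Equiv.swap (ppF m r) (qqF m r) j) = T.1 j := by
        rw [Equiv.swap_apply_of_ne_of_ne]
        · intro he
          have := congrArg Fin.val he
          rw [ppF_val hrm] at this
          omega
        · intro he
          have := congrArg Fin.val he
          rw [qqF_val hrm] at this
          omega
      rw [IH (by omega) _ S ⟨j, by omega, by
        show T.1 (Equiv.swap (ppF m r) (qqF m r) j) ≠ S.1 j
        rw [hswj]
        exact hj⟩]
      ring
    · rw [dif_neg h, map_zero]
      simp only [Pi.add_apply, Pi.smul_apply, Pi.zero_apply, smul_eq_mul]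
      rw [IH (by omega) T S ⟨j, by omega, hj⟩]
      ring

theorem rhoCoef_eq_contR {n : ℕ} (p q : Fin n) (T : Fin n → ℕ × ℕ) :
    rhoCoef p q T = (contR (T q) - contR (T p))⁻¹ := rfl

theorem AopL_diag (μ : YoungDiagram) (m : ℕ) :
    ∀ r, r ≤ m → ∀ (T : {T : Fin (m + 1) → ℕ × ℕ // IsStandardTableau μ (m + 1) T}),
      (AopL μ m r (Pi.single T 1)) T =
        ∏ i ∈ Finset.range r,
          (((contR (T.1 (qqF m i)) - contR (T.1 (ppF m i)))⁻¹ : ℝ) : ℂ) := by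
  intro r
  induction r with
  | zero =>
    intro _ T
    rw [AopL_zero]
    simp
  | succ r IH =>
    intro hr T
    have hrm : r < m := by omega
    rw [AopL_succ]
    simp only [Module.End.mul_apply]
    rw [youngOp_single μ (m + 1) _ _ (ppF_ne_qqF hrm) T]
    rw [map_add, map_smul]
    have hzero2 : ∀ (h : IsStandardTableau μ (m + 1)
        (T.1 ∘ Equiv.swap (ppF m r) (qqF m r))),
        (AopL μ m r (Pi.single
          (⟨T.1 ∘ Equiv.swap (ppF m r) (qqF m r), h⟩ :
            {T : Fin (m + 1) → ℕ × ℕ // IsStandardTableau μ (m + 1) T}) 1)) T = 0 := by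
      intro h
      apply AopL_vanish μ m r (by omega)
      refine ⟨qqF m r, by rw [qqF_val hrm], ?_⟩
      show T.1 (Equiv.swap (ppF m r) (qqF m r) (qqF m r)) ≠ T.1 (qqF m r)
      rw [Equiv.swap_apply_right]
      intro he
      exact ppF_ne_qqF hrm (T.2.1 he)
    rw [Finset.prod_range_succ, ← IH (by omega) T]
    by_cases h : IsStandardTableau μ (m + 1) (T.1 ∘ Equiv.swap (ppF m r) (qqF m r))
    · rw [dif_pos h, map_smul]
      simp only [Pi.add_apply, Pi.smul_apply, smul_eq_mul]
      rw [hzero2 h, rhoCoef_eq_contR]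
      ring
    · rw [dif_neg h, map_zero]
      simp only [Pi.add_apply, Pi.smul_apply, Pi.zero_apply, smul_eq_mul]
      rw [rhoCoef_eq_contR]
      ring

theorem swapProd_apply (m : ℕ) :
    ∀ r, r ≤ m → ∀ x : Fin (m + 1),
      ((((List.range r).map (fun i => Equiv.swap (ppF m i) (qqF m i))).prod x : Fin (m + 1)) : ℕ) =
        if (x : ℕ) < r then (x : ℕ) + 1 else if (x : ℕ) = r then 0 else (x : ℕ) := by
  intro r
  induction r with
  | zero =>
    intro _ x
    simp only [List.range_zero, List.map_nil, List.prod_nil, Equiv.Perm.coe_one, id_eq]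
    split_ifs <;> omega
  | succ r IH =>
    intro hr x
    have hrm : r < m := by omega
    rw [List.range_succ, List.map_append, List.prod_append]
    simp only [List.map_cons, List.map_nil, List.prod_cons, List.prod_nil, mul_one,
      Equiv.Perm.mul_apply]
    rcases eq_or_ne x (ppF m r) with rfl | hxp
    · rw [Equiv.swap_apply_left, IH (by omega), qqF_val hrm, ppF_val hrm]
      split_ifs <;> omega
    · rcases eq_or_ne x (qqF m r) with rfl | hxq
      · rw [Equiv.swap_apply_right, IH (by omega), qqF_val hrm, ppF_val hrm]
        split_ifs <;> omega
      · rw [Equiv.swap_apply_of_ne_of_ne hxp hxq, IH (by omega)]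
        have hp : (x : ℕ) ≠ r := by
          intro he
          exact hxp (Fin.ext (by rw [ppF_val hrm, he]))
        have hq : (x : ℕ) ≠ r + 1 := by
          intro he
          exact hxq (Fin.ext (by rw [qqF_val hrm, he]))
        split_ifs <;> omega

theorem finRotate_factor (m : ℕ) :
    finRotate (m + 1) =
      ((List.range m).map (fun i => Equiv.swap (ppF m i) (qqF m i))).prod := by
  apply Equiv.ext
  intro x
  apply Fin.ext
  rw [swapProd_apply m m le_rfl x, finRotate_succ_apply, Fin.val_add_one]
  have hx : (x : ℕ) ≤ m := by omega
  by_cases hlast : x = Fin.last m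
  · rw [if_pos hlast]
    have : (x : ℕ) = m := by rw [hlast]; rfl
    split_ifs <;> omega
  · rw [if_neg hlast]
    have : (x : ℕ) ≠ m := by
      intro he
      exact hlast (Fin.ext (by rw [he]; rfl))
    split_ifs <;> omega

theorem isStandard_iff_std (μ : YoungDiagram) (n : ℕ) (T : Fin n → ℕ × ℕ) :
    IsStandardTableau μ n T ↔ Std μ.cells n T := Iff.rfl

noncomputable instance (μ : YoungDiagram) (n : ℕ) :
    Fintype {T : Fin n → ℕ × ℕ // IsStandardTableau μ n T} :=
  Fintype.ofEquiv {T : Fin n → ℕ × ℕ // Std μ.cells n T}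
    (Equiv.subtypeEquivRight (fun T => (isStandard_iff_std μ n T).symm))

theorem wt_eq_prodWt (m : ℕ) (T : Fin (m + 1) → ℕ × ℕ) :
    wt T = ∏ i ∈ Finset.range m, (contR (T (qqF m i)) - contR (T (ppF m i)))⁻¹ := by
  rw [← Fin.prod_univ_eq_prod_range
    (fun i => (contR (T (qqF m i)) - contR (T (ppF m i)))⁻¹) m]
  unfold wt
  apply Finset.prod_congr rfl
  intro i _
  have h1 : qqF m (i : ℕ) = i.succ := by
    apply Fin.ext
    have := i.isLt
    show min ((i : ℕ) + 1) m = (i : ℕ) + 1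
    omega
  have h2 : ppF m (i : ℕ) = i.castSucc := by
    apply Fin.ext
    have := i.isLt
    show min (i : ℕ) m = (i : ℕ)
    omega
  rw [h1, h2]

theorem trace_eq (μ : YoungDiagram) (m : ℕ)
    (ρ : Representation ℂ (Equiv.Perm (Fin (m + 1))) (YoungSpace μ (m + 1)))
    (hρ : IsYoungOrthogonalRep μ (m + 1) ρ) :
    LinearMap.trace ℂ (YoungSpace μ (m + 1)) (ρ (finRotate (m + 1))) =
      ((Ssum m μ.cells : ℝ) : ℂ) := by
  classical
  have hfact : ρ (finRotate (m + 1)) = AopL μ m m := by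
    rw [finRotate_factor m, map_list_prod]
    unfold AopL
    rw [List.map_map]
    congr 1
    apply List.map_congr_left
    intro i hi
    have him : i < m := List.mem_range.1 hi
    exact hρ (ppF m i) (qqF m i) (by rw [ppF_val him, qqF_val him])
  rw [hfact]
  rw [LinearMap.trace_eq_matrix_trace ℂ
    (Pi.basisFun ℂ {T : Fin (m + 1) → ℕ × ℕ // IsStandardTableau μ (m + 1) T})]
  rw [Matrix.trace]
  have hdiag : ∀ T : {T : Fin (m + 1) → ℕ × ℕ // IsStandardTableau μ (m + 1) T},
      (LinearMap.toMatrix (Pi.basisFun ℂ _) (Pi.basisFun ℂ _) (AopL μ m m)) T T =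
        ((wt T.1 : ℝ) : ℂ) := by
    intro T
    rw [LinearMap.toMatrix_apply, Pi.basisFun_apply, Pi.basisFun_repr]
    rw [AopL_diag μ m m le_rfl T, wt_eq_prodWt m T.1]
    rw [Complex.ofReal_prod]
  calc ∑ T, Matrix.diag (LinearMap.toMatrix (Pi.basisFun ℂ _) (Pi.basisFun ℂ _)
        (AopL μ m m)) T
      = ∑ T : {T : Fin (m + 1) → ℕ × ℕ // IsStandardTableau μ (m + 1) T},
          ((wt T.1 : ℝ) : ℂ) := by
        apply Finset.sum_congr rfl
        intro T _
        exact hdiag T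
    _ = ∑ T : {T : Fin (m + 1) → ℕ × ℕ // Std μ.cells (m + 1) T}, ((wt T.1 : ℝ) : ℂ) := by
        apply Fintype.sum_equiv
          (Equiv.subtypeEquivRight (fun T => isStandard_iff_std μ (m + 1) T))
        intro T
        rfl
    _ = ((Ssum m μ.cells : ℝ) : ℂ) := by
        rw [Ssum, Complex.ofReal_sum]

/-- The value of the irreducible character `χ^μ` of `S_k` (given by Young's orthogonal
form) at the `k`-cycle `(1 2 … k)` (realized as `finRotate k : Equiv.Perm (Fin k)`):
it equals `(−1)^b` if `μ` is the hook `(k−b, 1, …, 1)` with `b` ones — i.e. if `μ` does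
not contain the box `(1,1)` (0-indexed), in which case `b = colLen 0 − 1` — and `0` if
`μ` is not a hook, i.e. if `(1,1) ∈ μ`. -/
theorem character_at_full_cycle (k : ℕ) (hk : 0 < k)
    (μ : YoungDiagram) (hμ : μ.card = k)
    (ρ : Representation ℂ (Equiv.Perm (Fin k)) (YoungSpace μ k))
    (hρ : IsYoungOrthogonalRep μ k ρ) :
    (((1, 1) : ℕ × ℕ) ∉ μ →
      LinearMap.trace ℂ (YoungSpace μ k) (ρ (finRotate k)) =
        (-1 : ℂ) ^ (μ.colLen 0 - 1)) ∧
    (((1, 1) : ℕ × ℕ) ∈ μ →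
      LinearMap.trace ℂ (YoungSpace μ k) (ρ (finRotate k)) = 0) := by

  obtain ⟨m, rfl⟩ : ∃ m, k = m + 1 := ⟨k - 1, by omega⟩
  have hcard : μ.cells.card = m + 1 := hμ
  have htr := trace_eq μ m ρ hρ
  constructor
  · intro h11
    have h11' : ((1, 1) : ℕ × ℕ) ∉ μ.cells := by
      rwa [YoungDiagram.mem_cells]
    have hne : μ.cells.Nonempty := Finset.card_pos.1 (by omega)
    obtain ⟨a, b, hab⟩ := hook_struct μ.isLowerSet hne h11'
    have hS := (Ssum_eval m μ.cells μ.isLowerSet hcard).2 a b hab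
    have hcol : μ.colLen 0 = b + 1 := by
      have hmem : ((b, 0) : ℕ × ℕ) ∈ μ := by
        rw [← YoungDiagram.mem_cells, hab, mem_hookF]
        right
        exact ⟨rfl, le_rfl⟩
      have hnot : ((b + 1, 0) : ℕ × ℕ) ∉ μ := by
        rw [← YoungDiagram.mem_cells, hab, mem_hookF]
        push_neg
        constructor
        · intro h
          omega
        · intro _
          omega
      have h1 := YoungDiagram.mem_iff_lt_colLen.1 hmem
      have h2 : ¬(b + 1 < μ.colLen 0) := fun hc =>
        hnot (YoungDiagram.mem_iff_lt_colLen.2 hc)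
      omega
    rw [htr, hS, hcol]
    simp only [Nat.add_sub_cancel]
    push_cast
    ring
  · intro h11
    rw [htr, (Ssum_eval m μ.cells μ.isLowerSet hcard).1 (by rwa [← YoungDiagram.mem_cells] at h11)]
    simp
end

section
/- Let R = ℂ[x_1, x_2, …] be the polynomial ring in countably many variables and let ζ ∈ ℂ be nonzero. Then any ℂ-subspace of R that is invariant under all the partial derivative operators ∂/∂x_n (n ≥ 1) and under all the multiplication operators f ↦ ζ n x_n f (n ≥ 1) is either 0 or all of R. (Equivalently, the bosonic Fock space representation ℬ(α, ζ) of the Heisenberg algebra is irreducible for ζ ≠ 0.) -/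
open MvPolynomial

/-- Coefficient of a partial derivative. -/
lemma coeff_pderiv_aux (i : ℕ) (f : MvPolynomial ℕ ℂ) (m : ℕ →₀ ℕ) :
    coeff m (pderiv i f) = ((m i : ℂ) + 1) * coeff (m + Finsupp.single i 1) f := by
  induction f using MvPolynomial.induction_on' with
  | monomial s a =>
    rw [pderiv_monomial, coeff_monomial, coeff_monomial]
    by_cases h : s = m + Finsupp.single i 1
    · subst h
      rw [if_pos (add_tsub_cancel_right m (Finsupp.single i 1)), if_pos rfl]
      have h2 : ((m + Finsupp.single i 1 : ℕ →₀ ℕ)) i = m i + 1 := by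
        simp
      rw [h2]
      push_cast
      ring
    · rw [if_neg h]
      by_cases h1 : s - Finsupp.single i 1 = m
      · have h2 : s i = 0 := by
          by_contra h2
          apply h
          ext j
          rcases eq_or_ne j i with rfl | hj
          · have := congrArg (fun g : ℕ →₀ ℕ => g j) h1
            simp only [Finsupp.tsub_apply, Finsupp.single_eq_same] at this
            simp only [Finsupp.add_apply, Finsupp.single_eq_same]
            omega
          · have := congrArg (fun g : ℕ →₀ ℕ => g j) h1
            simp only [Finsupp.tsub_apply, Finsupp.single_apply, if_neg (Ne.symm hj),
              tsub_zero] at this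
            simp [Finsupp.single_apply, Ne.symm hj, this]
        rw [if_pos h1, h2]
        simp
      · rw [if_neg h1, mul_zero]
  | add f g hf hg =>
    simp only [map_add, coeff_add, hf, hg]; ring

/-- Irreducibility of the bosonic Fock space:  let `R = ℂ[x₁, x₂, …]` be the polynomial
ring in countably many variables (here `xₙ` is `MvPolynomial.X (n-1)`, i.e. the variable
with index `n - 1 : ℕ`) and let `ζ ≠ 0`.  Any `ℂ`-subspace of `R` invariant under all
partial derivatives `∂/∂xₙ` and under all multiplication operators `f ↦ ζ n xₙ f`
(`n ≥ 1`) is either `0` or all of `R`. -/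
theorem bosonic_fock_space_irreducible (ζ : ℂ) (hζ : ζ ≠ 0)
    (p : Submodule ℂ (MvPolynomial ℕ ℂ))
    (hder : ∀ (i : ℕ) (f : MvPolynomial ℕ ℂ), f ∈ p → MvPolynomial.pderiv i f ∈ p)
    (hmul : ∀ (i : ℕ) (f : MvPolynomial ℕ ℂ), f ∈ p →
      (ζ * ((i : ℂ) + 1)) • (MvPolynomial.X i * f) ∈ p) :
    p = ⊥ ∨ p = ⊤ := by
  rcases eq_or_ne p ⊥ with h | h
  · exact Or.inl h
  right
  -- Step 1: 1 ∈ p, by strong induction on total degree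
  have hone : (1 : MvPolynomial ℕ ℂ) ∈ p := by
    suffices H : ∀ n : ℕ, ∀ f : MvPolynomial ℕ ℂ, f ∈ p → f ≠ 0 → f.totalDegree = n →
        (1 : MvPolynomial ℕ ℂ) ∈ p by
      obtain ⟨f, hfp, hf0⟩ : ∃ f ∈ p, f ≠ 0 := by
        by_contra hc
        push_neg at hc
        exact h (le_antisymm (fun x hx => by simpa using hc x hx) bot_le)
      exact H f.totalDegree f hfp hf0 rfl
    intro n
    induction n using Nat.strong_induction_on with
    | _ n ih =>
      intro f hfp hf0 hdeg
      rcases Nat.eq_zero_or_pos n with hn | hn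
      · -- f is a nonzero constant
        subst hn
        have hsupp : f.support.Nonempty := MvPolynomial.support_nonempty.mpr hf0
        have hall : ∀ d ∈ f.support, d = 0 := by
          intro d hd
          have h1 : (d.sum fun _ e => e) = 0 := by
            have h2 : (d.sum fun _ e => e) ≤ f.totalDegree := MvPolynomial.le_totalDegree hd
            omega
          ext j
          simp only [Finsupp.coe_zero, Pi.zero_apply]
          by_contra hj
          have hjs : j ∈ d.support := Finsupp.mem_support_iff.mpr (fun hc => hj (by simp [hc]))
          have : d j ≤ d.sum fun _ e => e :=
            Finset.single_le_sum (fun _ _ => Nat.zero_le _) hjs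
          omega
        have h00 : coeff 0 f ≠ 0 := by
          obtain ⟨d, hd⟩ := hsupp
          have hd0 := hall d hd
          subst hd0
          exact Finsupp.mem_support_iff.mp hd
        have hfC : f = MvPolynomial.C (coeff 0 f) := by
          ext d
          rcases eq_or_ne d 0 with rfl | hd
          · simp
          · rw [coeff_C, if_neg (Ne.symm hd)]
            by_contra hc
            exact hd (hall d (Finsupp.mem_support_iff.mpr hc))
        obtain ⟨c, hc0, hfCc⟩ : ∃ c : ℂ, c ≠ 0 ∧ f = MvPolynomial.C c :=
          ⟨coeff 0 f, h00, hfC⟩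
        have hmem : c⁻¹ • f ∈ p := Submodule.smul_mem p _ hfp
        have heq : c⁻¹ • f = 1 := by
          rw [hfCc, MvPolynomial.smul_eq_C_mul, ← MvPolynomial.C_mul,
            inv_mul_cancel₀ hc0, MvPolynomial.C_1]
        rwa [heq] at hmem
      · -- positive degree: differentiate
        obtain ⟨d, hd, hdsum⟩ := f.support.exists_mem_eq_sup
          (MvPolynomial.support_nonempty.mpr hf0) fun d => d.sum fun _ e => e
        have hdsum' : (d.sum fun _ e => e) = n := by
          rw [← hdeg]; exact hdsum.symm
        have hdne : ∃ i, d i ≠ 0 := by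
          by_contra hc
          push_neg at hc
          have hd0 : d = 0 := Finsupp.ext fun j => hc j
          rw [hd0] at hdsum'
          simp at hdsum'
          omega
        obtain ⟨i, hi⟩ := hdne
        set g := MvPolynomial.pderiv i f with hg
        have hgp : g ∈ p := hder i f hfp
        have hrec : (d - Finsupp.single i 1) + Finsupp.single i 1 = d := by
          ext j
          simp only [Finsupp.add_apply, Finsupp.tsub_apply, Finsupp.single_apply]
          split_ifs with hij
          · subst hij; omega
          · omega
        have hcoeff : coeff (d - Finsupp.single i 1) g ≠ 0 := by
          rw [hg, coeff_pderiv_aux, hrec]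
          have hnat : ((d - Finsupp.single i 1 : ℕ →₀ ℕ)) i + 1 = d i := by
            simp only [Finsupp.tsub_apply, Finsupp.single_eq_same]
            omega
          have h1 : ((((d - Finsupp.single i 1 : ℕ →₀ ℕ)) i : ℕ) : ℂ) + 1 = ((d i : ℕ) : ℂ) := by
            exact_mod_cast hnat
          rw [h1]
          exact mul_ne_zero (Nat.cast_ne_zero.mpr hi) (Finsupp.mem_support_iff.mp hd)
        have hg0 : g ≠ 0 := fun hgz => hcoeff (by simp [hgz])
        have hglt : g.totalDegree < n := by
          show g.support.sup (fun d => d.sum fun _ e => e) < n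
          apply Finset.sup_lt_iff (by simpa using hn) |>.mpr
          intro m hm
          have hcm : coeff (m + Finsupp.single i 1) f ≠ 0 := by
            intro hc
            have hthis := coeff_pderiv_aux i f m
            rw [hc, mul_zero] at hthis
            exact Finsupp.mem_support_iff.mp hm (hg ▸ hthis)
          have hle : ((m + Finsupp.single i 1).sum fun _ e => e) ≤ n := by
            rw [← hdeg]
            exact MvPolynomial.le_totalDegree (Finsupp.mem_support_iff.mpr hcm)
          have hsum : ((m + Finsupp.single i 1).sum fun _ e => e)
              = (m.sum fun _ e => e) + 1 := by
            rw [Finsupp.sum_add_index (by simp) (by simp)]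
            simp
          omega
        exact ih g.totalDegree hglt g hgp hg0 rfl
  -- Step 2: closure under multiplication by X i
  have hX : ∀ (i : ℕ) (f : MvPolynomial ℕ ℂ), f ∈ p → MvPolynomial.X i * f ∈ p := by
    intro i f hf
    have hc : (ζ * ((i : ℂ) + 1)) ≠ 0 := by
      apply mul_ne_zero hζ
      have := Nat.cast_add_one_ne_zero (R := ℂ) i
      push_cast at this
      exact this
    have hsm := Submodule.smul_mem p (ζ * ((i : ℂ) + 1))⁻¹ (hmul i f hf)
    rwa [inv_smul_smul₀ hc] at hsm
  -- Step 3: all monomials are in p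
  have hmono : ∀ d : ℕ →₀ ℕ, (MvPolynomial.monomial d (1 : ℂ)) ∈ p := by
    intro d
    induction d using Finsupp.induction with
    | zero => simpa using hone
    | single_add i b d hid hb ihd =>
      have hpow : ∀ k : ℕ, MvPolynomial.X i ^ k * MvPolynomial.monomial d (1 : ℂ) ∈ p := by
        intro k
        induction k with
        | zero => simpa using ihd
        | succ k ihk =>
          have hXk := hX i _ ihk
          rwa [← mul_assoc, mul_comm (MvPolynomial.X i) (MvPolynomial.X i ^ k), ← pow_succ]
            at hXk
      have hb' := hpow b
      rwa [MvPolynomial.X_pow_eq_monomial, MvPolynomial.monomial_mul, one_mul] at hb'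
  -- Step 4: p = ⊤
  ext f
  simp only [Submodule.mem_top, iff_true]
  rw [f.as_sum]
  apply Submodule.sum_mem
  intro d hd
  have hms : MvPolynomial.monomial d (coeff d f) = coeff d f • MvPolynomial.monomial d 1 := by
    rw [MvPolynomial.smul_monomial, smul_eq_mul, mul_one]
  rw [hms]
  exact Submodule.smul_mem p _ (hmono d)
end
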